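/- arXiv:1401.0777 — 3 statements merged into one kernel-verified Lean document; each statement's English description precedes it below -/
import Mathlib

section
/- Let (H^q)_{q∈Z} be a family of finite-dimensional Z₂-vector spaces indexed by integers, zero for q < 0 and q > n, where n ≡ 2 (mod 3), n ≥ 5. Set d = (2n−1)/3 (an odd integer). Suppose for every q there is an exact sequence H^{q+d} → H^q → H^{q−d} of Z₂-vector spaces (with the maps composable into a long exact pattern, i.e. ⊕_q of the homology of these three-term complexes vanishes), H⁰ ≅ Z₂, and H^n ≅ Z₂, and dim H^q = dim H^{n−q} for all q (Poincaré duality). Then: H^{(n+1)/3} ≅ Z₂, H^{(2n−1)/3} ≅ Z₂; H^q = 0 for (n+4)/3 ≤ q ≤ (2n−4)/3 (when n ≥ 8); H^q ≅ H^{q+d} for 1 ≤ q ≤ (n−2)/3; and Σ_q (−1)^q dim H^q = 0. -/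
/-- Transport a linear equivalence along an equality of indices. -/
def lequivOfEq (H : ℤ → Type) [∀ q, AddCommGroup (H q)] [∀ q, Module (ZMod 2) (H q)]
    {a b : ℤ} (h : a = b) : H a ≃ₗ[ZMod 2] H b := h ▸ LinearEquiv.refl _ _

/-- Homological rigidity (Proposition 4.7).  Let `(H^q)_{q∈ℤ}` be finite-dimensional
`ℤ₂`-vector spaces, zero for `q < 0` and `q > n`, where `n ≡ 2 (mod 3)`, `n ≥ 5`;
write `n + 1 = 3k` and `2n − 1 = 3d`.  Suppose there are maps `δ_q : H^q → H^{q−d}`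
with `range (δ_q) = ker (δ_{q−d})` for all `q` (the long exact `[∂₁]`-pattern),
`H⁰ ≅ ℤ₂`, `H^n ≅ ℤ₂`, and `dim H^q = dim H^{n−q}` (Poincaré duality).  Then
`H^k ≅ ℤ₂ ≅ H^d`; `H^q = 0` for `k+1 ≤ q ≤ d−1` (when `n ≥ 8`); `H^q ≅ H^{q+d}` for
`1 ≤ q ≤ k−1`; and `Σ_q (−1)^q dim H^q = 0`. -/
theorem stmt_10 (n k d : ℤ) (hn5 : 5 ≤ n) (hmod : n % 3 = 2)
    (hk : n + 1 = 3 * k) (hd : 2 * n - 1 = 3 * d)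
    (H : ℤ → Type) [∀ q, AddCommGroup (H q)] [∀ q, Module (ZMod 2) (H q)]
    [∀ q, Module.Finite (ZMod 2) (H q)]
    (hlow : ∀ q : ℤ, q < 0 → Subsingleton (H q))
    (hhigh : ∀ q : ℤ, n < q → Subsingleton (H q))
    (δ : ∀ q : ℤ, H q →ₗ[ZMod 2] H (q - d))
    (hexact : ∀ q : ℤ, LinearMap.range (δ q) = LinearMap.ker (δ (q - d)))
    (h0 : Module.finrank (ZMod 2) (H 0) = 1)
    (hn : Module.finrank (ZMod 2) (H n) = 1)
    (hpd : ∀ q : ℤ, Module.finrank (ZMod 2) (H q) = Module.finrank (ZMod 2) (H (n - q))) :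
    Module.finrank (ZMod 2) (H k) = 1 ∧
    Module.finrank (ZMod 2) (H d) = 1 ∧
    (8 ≤ n → ∀ q : ℤ, k + 1 ≤ q → q ≤ d - 1 → Subsingleton (H q)) ∧
    (∀ q : ℤ, 1 ≤ q → q ≤ k - 1 → Nonempty (H q ≃ₗ[ZMod 2] H (q + d))) ∧
    ∑ q ∈ Finset.Icc (0 : ℤ) n,
      (-1 : ℤ) ^ q.toNat * (Module.finrank (ZMod 2) (H q) : ℤ) = 0 := by
  have range_bot : ∀ m : ℤ, Subsingleton (H m) → LinearMap.range (δ m) = ⊥ := by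
    intro m hm
    apply LinearMap.range_eq_bot.mpr
    exact LinearMap.ext fun x => by rw [Subsingleton.elim x (0 : H m)]; simp
  have ker_top : ∀ m : ℤ, Subsingleton (H (m - d)) → LinearMap.ker (δ m) = ⊤ := by
    intro m hm
    ext x
    simp [LinearMap.mem_ker, Subsingleton.elim (δ m x) (0 : H (m - d))]
  have inj : ∀ b : ℤ, Subsingleton (H b) → Function.Injective (δ (b - d)) := by
    intro b hb
    exact LinearMap.ker_eq_bot.mp (by rw [← hexact b, range_bot b hb])
  have surj : ∀ a : ℤ, Subsingleton (H (a - d - d)) → Function.Surjective (δ a) := by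
    intro a ha
    exact LinearMap.range_eq_top.mp (by rw [hexact a, ker_top (a - d) ha])
  have inj_congr : ∀ a b : ℤ, a = b → Function.Injective (δ a) → Function.Injective (δ b) := by
    intro a b h hi; subst h; exact hi
  -- the key isomorphism  H (q+d) ≃ H q  for 0 ≤ q < d
  have key : ∀ q : ℤ, 0 ≤ q → q < d → Nonempty (H (q + d) ≃ₗ[ZMod 2] H q) := by
    intro q h0q h1q
    have hb : Subsingleton (H (q + d + d)) := hhigh _ (by omega)
    have hi : Function.Injective (δ (q + d)) :=
      inj_congr (q + d + d - d) (q + d) (by ring) (inj (q + d + d) hb)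
    have hs : Function.Surjective (δ (q + d)) :=
      surj (q + d) (hlow _ (by omega))
    exact ⟨(LinearEquiv.ofBijective (δ (q + d)) ⟨hi, hs⟩).trans
      (lequivOfEq H (by ring : q + d - d = q))⟩
  have hrank : ∀ q : ℤ, 0 ≤ q → q < d →
      Module.finrank (ZMod 2) (H (q + d)) = Module.finrank (ZMod 2) (H q) := by
    intro q h0q h1q
    obtain ⟨e⟩ := key q h0q h1q
    exact e.finrank_eq
  have hdrank : Module.finrank (ZMod 2) (H d) = 1 := by
    have := hrank 0 le_rfl (by omega)
    rw [zero_add, h0] at this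
    exact this
  have hkrank : Module.finrank (ZMod 2) (H k) = 1 := by
    have := hpd k
    rw [show n - k = d by omega, hdrank] at this
    exact this
  have hmid : ∀ q : ℤ, k + 1 ≤ q → q ≤ d - 1 → Subsingleton (H q) := by
    intro q h1 h2
    obtain ⟨e⟩ := key q (by omega) (by omega)
    haveI : Subsingleton (H (q + d)) := hhigh _ (by omega)
    exact e.symm.toEquiv.subsingleton
  refine ⟨hkrank, hdrank, fun _ q h1 h2 => hmid q h1 h2, ?_, ?_⟩
  · intro q h1 h2
    obtain ⟨e⟩ := key q (by omega) (by omega)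
    exact ⟨e.symm⟩
  · -- Euler characteristic
    have hdodd : Odd d.toNat := by rw [Nat.odd_iff]; omega
    have hzero : ∀ q : ℤ, k + 1 ≤ q → q ≤ d - 1 → Module.finrank (ZMod 2) (H q) = 0 := by
      intro q h1 h2
      haveI := hmid q h1 h2
      exact Module.finrank_zero_of_subsingleton
    set f : ℤ → ℤ := fun q => (-1 : ℤ) ^ q.toNat * (Module.finrank (ZMod 2) (H q) : ℤ) with hf
    have hpair : ∀ q : ℤ, 0 ≤ q → q ≤ k → f q + f (q + d) = 0 := by
      intro q h0q hqk
      have hr : Module.finrank (ZMod 2) (H (q + d)) = Module.finrank (ZMod 2) (H q) :=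
        hrank q h0q (by omega)
      have hsign : ((-1 : ℤ)) ^ (q + d).toNat = -((-1 : ℤ) ^ q.toNat) := by
        have : (q + d).toNat = q.toNat + d.toNat := by omega
        rw [this, pow_add, hdodd.neg_one_pow]
        ring
      simp only [hf, hr, hsign]
      ring
    apply Finset.sum_involution
      (g := fun q (_ : q ∈ Finset.Icc (0 : ℤ) n) =>
        if q ≤ k then q + d else if q < d then q else q - d)
    case hg₁ =>
      intro q hq
      simp only [Finset.mem_Icc] at hq
      by_cases h1 : q ≤ k
      · rw [if_pos h1]
        exact hpair q hq.1 h1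
      · by_cases h2 : q < d
        · rw [if_neg h1, if_pos h2]
          simp [hzero q (by omega) (by omega)]
        · rw [if_neg h1, if_neg h2]
          have := hpair (q - d) (by omega) (by omega)
          rw [show q - d + d = q by ring] at this
          simp only [hf] at this
          linarith
    case hg₃ =>
      intro q hq hfq
      simp only [Finset.mem_Icc] at hq
      by_cases h1 : q ≤ k
      · simp only [if_pos h1]; omega
      · by_cases h2 : q < d
        · exfalso
          apply hfq
          simp [hf, hzero q (by omega) (by omega)]
        · simp only [if_neg h1, if_neg h2]; omega
    case g_mem =>
      intro q hq
      simp only [Finset.mem_Icc] at hq ⊢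
      by_cases h1 : q ≤ k
      · simp only [if_pos h1]; omega
      · by_cases h2 : q < d
        · simp only [if_neg h1, if_pos h2]; omega
        · simp only [if_neg h1, if_neg h2]; omega
    case hg₄ =>
      intro q hq
      simp only [Finset.mem_Icc] at hq
      by_cases h1 : q ≤ k
      · simp only [if_pos h1, if_neg (show ¬ q + d ≤ k by omega),
          if_neg (show ¬ q + d < d by omega)]
        ring
      · by_cases h2 : q < d
        · simp only [if_neg h1, if_pos h2]
        · simp only [if_neg h1, if_neg h2, if_pos (show q - d ≤ k by omega)]
          ring
end

section
/- Let (H^q) be finite-dimensional Z₂-vector spaces, zero outside 0 ≤ q ≤ 8, with H⁰ ≅ H⁸ ≅ Z₂, H¹ = H² = 0, dim H^q = dim H^{8−q} for all q, and such that for every q the three-term sequence H^{q+5} → H^q → H^{q−5} is exact. Then dim H^q = 1 for q ∈ {0,3,5,8} and H^q = 0 otherwise. -/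
/-- Graded computation in Theorem 1.6(2).  Let `(H^q)` be finite-dimensional
`ℤ₂`-vector spaces, zero outside `0 ≤ q ≤ 8`, with `H⁰ ≅ H⁸ ≅ ℤ₂`, `H¹ = H² = 0`,
`dim H^q = dim H^{8−q}`, and maps `δ_q : H^q → H^{q−5}` with
`range (δ_q) = ker (δ_{q−5})` (exactness of `H^{q+5} → H^q → H^{q−5}`) for every `q`.
Then `dim H^q = 1` for `q ∈ {0,3,5,8}` and `H^q = 0` otherwise. -/
theorem stmt_11 (H : ℤ → Type) [∀ q, AddCommGroup (H q)] [∀ q, Module (ZMod 2) (H q)]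
    [∀ q, Module.Finite (ZMod 2) (H q)]
    (hout : ∀ q : ℤ, q < 0 ∨ 8 < q → Subsingleton (H q))
    (h0 : Module.finrank (ZMod 2) (H 0) = 1)
    (h8 : Module.finrank (ZMod 2) (H 8) = 1)
    (h1 : Subsingleton (H 1)) (h2 : Subsingleton (H 2))
    (hpd : ∀ q : ℤ, Module.finrank (ZMod 2) (H q) = Module.finrank (ZMod 2) (H (8 - q)))
    (δ : ∀ q : ℤ, H q →ₗ[ZMod 2] H (q - 5))
    (hexact : ∀ q : ℤ, LinearMap.range (δ q) = LinearMap.ker (δ (q - 5))) :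
    ∀ q : ℤ, (q = 0 ∨ q = 3 ∨ q = 5 ∨ q = 8 → Module.finrank (ZMod 2) (H q) = 1) ∧
      (¬ (q = 0 ∨ q = 3 ∨ q = 5 ∨ q = 8) → Subsingleton (H q)) := by
  -- δ 5 is injective: range δ 10 = ker δ 5, and H 10 = 0
  have h10 : Subsingleton (H 10) := hout 10 (by norm_num)
  have hker5 : LinearMap.ker (δ 5) = ⊥ := by
    have h : LinearMap.range (δ 10) = LinearMap.ker (δ 5) := hexact 10
    rw [← h, LinearMap.range_eq_bot]
    ext x
    rw [Subsingleton.elim x 0, map_zero]; rfl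
  -- δ 5 is surjective: range δ 5 = ker δ 0, and H (-5) = 0
  have hm5 : Subsingleton (H (0 - 5)) := hout _ (by norm_num)
  have hrange5 : LinearMap.range (δ 5) = ⊤ := by
    have h : LinearMap.range (δ 5) = LinearMap.ker (δ 0) := hexact 5
    rw [h, LinearMap.ker_eq_top]
    ext x
    exact Subsingleton.elim _ _
  -- hence dim H 5 = dim H 0 = 1
  have h5 : Module.finrank (ZMod 2) (H 5) = 1 := by
    have e : H 5 ≃ₗ[ZMod 2] H 0 :=
      LinearEquiv.ofBijective (δ 5)
        ⟨LinearMap.ker_eq_bot.mp hker5, LinearMap.range_eq_top.mp hrange5⟩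
    rw [e.finrank_eq]; exact h0
  have h3 : Module.finrank (ZMod 2) (H 3) = 1 := by
    have hh : Module.finrank (ZMod 2) (H 3) = Module.finrank (ZMod 2) (H 5) := hpd 3
    rw [hh]; exact h5
  -- H 4 = 0 : range δ 9 = ker δ 4, domain H 9 = 0, codomain H (-1) = 0
  have h9 : Subsingleton (H 9) := hout 9 (by norm_num)
  have hm1 : Subsingleton (H (4 - 5)) := hout _ (by norm_num)
  have h4 : Subsingleton (H 4) := by
    have h : LinearMap.range (δ 9) = LinearMap.ker (δ 4) := hexact 9
    refine subsingleton_of_forall_eq 0 fun x => ?_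
    have hx : x ∈ LinearMap.ker (δ 4) := by
      simp only [LinearMap.mem_ker]
      exact Subsingleton.elim _ _
    rw [← h] at hx
    obtain ⟨y, hy⟩ := hx
    rw [← hy, Subsingleton.elim y 0, map_zero]
  have frk_zero : ∀ q : ℤ, Subsingleton (H q) → Module.finrank (ZMod 2) (H q) = 0 :=
    fun q hq => Module.finrank_zero_iff.mpr hq
  have h6 : Subsingleton (H 6) := by
    have hh : Module.finrank (ZMod 2) (H 6) = Module.finrank (ZMod 2) (H 2) := hpd 6
    rw [frk_zero 2 h2] at hh
    exact Module.finrank_zero_iff.mp hh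
  have h7 : Subsingleton (H 7) := by
    have hh : Module.finrank (ZMod 2) (H 7) = Module.finrank (ZMod 2) (H 1) := hpd 7
    rw [frk_zero 1 h1] at hh
    exact Module.finrank_zero_iff.mp hh
  intro q
  constructor
  · rintro (rfl | rfl | rfl | rfl)
    · exact h0
    · exact h3
    · exact h5
    · exact h8
  · intro hq
    by_cases hb : q < 0 ∨ 8 < q
    · exact hout q hb
    · push_neg at hb
      obtain ⟨hl, hr⟩ := hb
      interval_cases q
      · exact absurd (Or.inl rfl) hq
      · exact h1
      · exact h2
      · exact absurd (Or.inr (Or.inl rfl)) hq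
      · exact h4
      · exact absurd (Or.inr (Or.inr (Or.inl rfl))) hq
      · exact h6
      · exact h7
      · exact absurd (Or.inr (Or.inr (Or.inr rfl))) hq
end

section
/- Let (H^q) be finite-dimensional Z₂-vector spaces, zero outside 0 ≤ q ≤ 26, with H⁰ ≅ H^{26} ≅ Z₂, H¹ = H² = H³ = H⁴ = 0, dim H^q = dim H^{26−q}, and for every q the sequence H^{q+17} → H^q → H^{q−17} is exact. Then dim H^q = 1 for q ∈ {0,9,17,26} and H^q = 0 otherwise. -/
/-- Graded computation in Theorem 1.6(3).  Let `(H^q)` be finite-dimensional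
`ℤ₂`-vector spaces, zero outside `0 ≤ q ≤ 26`, with `H⁰ ≅ H²⁶ ≅ ℤ₂`,
`H¹ = H² = H³ = H⁴ = 0`, `dim H^q = dim H^{26−q}`, and maps `δ_q : H^q → H^{q−17}` with
`range (δ_q) = ker (δ_{q−17})` (exactness of `H^{q+17} → H^q → H^{q−17}`) for every `q`.
Then `dim H^q = 1` for `q ∈ {0,9,17,26}` and `H^q = 0` otherwise. -/
theorem stmt_12 (H : ℤ → Type) [∀ q, AddCommGroup (H q)] [∀ q, Module (ZMod 2) (H q)]
    [∀ q, Module.Finite (ZMod 2) (H q)]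
    (hout : ∀ q : ℤ, q < 0 ∨ 26 < q → Subsingleton (H q))
    (h0 : Module.finrank (ZMod 2) (H 0) = 1)
    (h26 : Module.finrank (ZMod 2) (H 26) = 1)
    (h1 : Subsingleton (H 1)) (h2 : Subsingleton (H 2))
    (h3 : Subsingleton (H 3)) (h4 : Subsingleton (H 4))
    (hpd : ∀ q : ℤ, Module.finrank (ZMod 2) (H q) = Module.finrank (ZMod 2) (H (26 - q)))
    (δ : ∀ q : ℤ, H q →ₗ[ZMod 2] H (q - 17))
    (hexact : ∀ q : ℤ, LinearMap.range (δ q) = LinearMap.ker (δ (q - 17))) :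
    ∀ q : ℤ, (q = 0 ∨ q = 9 ∨ q = 17 ∨ q = 26 → Module.finrank (ZMod 2) (H q) = 1) ∧
      (¬ (q = 0 ∨ q = 9 ∨ q = 17 ∨ q = 26) → Subsingleton (H q)) := by
  -- If both H^{q+34} and H^{q-17} are trivial, then δ_{q+17} : H^{q+17} → H^q is an iso.
  have hkey : ∀ q : ℤ, Subsingleton (H (q + 34)) → Subsingleton (H (q - 17)) →
      Module.finrank (ZMod 2) (H (q + 17)) = Module.finrank (ZMod 2) (H q) := by
    intro q hu hd
    have e1 : q + 17 - 17 = q := by ring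
    have hδ0 : δ (q + 34) = 0 := LinearMap.ext fun x => by
      rw [Subsingleton.elim x 0, map_zero, map_zero]
    have hinj : Function.Injective (δ (q + 17)) := by
      rw [← LinearMap.ker_eq_bot, show q + 17 = q + 34 - 17 from by ring,
        ← hexact (q + 34), hδ0, LinearMap.range_zero]
    have hδq0 : δ q = 0 := LinearMap.ext fun x => Subsingleton.elim _ _
    have hsurj : Function.Surjective (δ (q + 17)) := by
      rw [← LinearMap.range_eq_top, hexact (q + 17), e1, hδq0, LinearMap.ker_zero]
    have equiv := LinearEquiv.ofBijective (δ (q + 17)) ⟨hinj, hsurj⟩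
    have h := equiv.finrank_eq
    rw [e1] at h
    exact h
  -- If both H^{q+17} and H^{q-17} are trivial, so is H^q.
  have hsub : ∀ q : ℤ, Subsingleton (H (q + 17)) → Subsingleton (H (q - 17)) →
      Subsingleton (H q) := by
    intro q hu hd
    have hδ0 : δ (q + 17) = 0 := LinearMap.ext fun x => by
      rw [Subsingleton.elim x 0, map_zero, map_zero]
    have hker : LinearMap.ker (δ q) = ⊥ := by
      rw [show q = q + 17 - 17 from by ring, ← hexact (q + 17), hδ0, LinearMap.range_zero]
    refine subsingleton_of_forall_eq 0 fun a => ?_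
    have ha : a ∈ LinearMap.ker (δ q) := LinearMap.mem_ker.mpr (Subsingleton.elim _ _)
    rw [hker, Submodule.mem_bot] at ha
    exact ha
  have fz : ∀ q : ℤ, Module.finrank (ZMod 2) (H q) = 0 → Subsingleton (H q) :=
    fun q h => Module.finrank_zero_iff.mp h
  -- isomorphisms H^{q+17} ≅ H^q for 0 ≤ q ≤ 9, packaged with explicit target index
  have A : ∀ a b : ℤ, b = a + 17 → 0 ≤ a → a ≤ 9 →
      Module.finrank (ZMod 2) (H b) = Module.finrank (ZMod 2) (H a) := by
    intro a b e hl hr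
    subst e
    exact hkey a (hout _ (by omega)) (hout _ (by omega))
  have PD : ∀ a b : ℤ, b = 26 - a →
      Module.finrank (ZMod 2) (H a) = Module.finrank (ZMod 2) (H b) := by
    intro a b e; rw [e]; exact hpd a
  have d17 : Module.finrank (ZMod 2) (H 17) = 1 := by
    rw [A 0 17 (by norm_num) (by norm_num) (by norm_num)]; exact h0
  have d18 : Module.finrank (ZMod 2) (H 18) = 0 := by
    rw [A 1 18 (by norm_num) (by norm_num) (by norm_num)]
    exact Module.finrank_zero_of_subsingleton
  have d19 : Module.finrank (ZMod 2) (H 19) = 0 := by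
    rw [A 2 19 (by norm_num) (by norm_num) (by norm_num)]
    exact Module.finrank_zero_of_subsingleton
  have d20 : Module.finrank (ZMod 2) (H 20) = 0 := by
    rw [A 3 20 (by norm_num) (by norm_num) (by norm_num)]
    exact Module.finrank_zero_of_subsingleton
  have d21 : Module.finrank (ZMod 2) (H 21) = 0 := by
    rw [A 4 21 (by norm_num) (by norm_num) (by norm_num)]
    exact Module.finrank_zero_of_subsingleton
  have d5 : Module.finrank (ZMod 2) (H 5) = 0 := by
    rw [PD 5 21 (by norm_num)]; exact d21
  have d6 : Module.finrank (ZMod 2) (H 6) = 0 := by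
    rw [PD 6 20 (by norm_num)]; exact d20
  have d7 : Module.finrank (ZMod 2) (H 7) = 0 := by
    rw [PD 7 19 (by norm_num)]; exact d19
  have d8 : Module.finrank (ZMod 2) (H 8) = 0 := by
    rw [PD 8 18 (by norm_num)]; exact d18
  have d22 : Module.finrank (ZMod 2) (H 22) = 0 := by
    rw [A 5 22 (by norm_num) (by norm_num) (by norm_num)]; exact d5
  have d23 : Module.finrank (ZMod 2) (H 23) = 0 := by
    rw [A 6 23 (by norm_num) (by norm_num) (by norm_num)]; exact d6
  have d24 : Module.finrank (ZMod 2) (H 24) = 0 := by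
    rw [A 7 24 (by norm_num) (by norm_num) (by norm_num)]; exact d7
  have d25 : Module.finrank (ZMod 2) (H 25) = 0 := by
    rw [A 8 25 (by norm_num) (by norm_num) (by norm_num)]; exact d8
  have d9 : Module.finrank (ZMod 2) (H 9) = 1 := by
    rw [PD 9 17 (by norm_num)]; exact d17
  have S10 : Subsingleton (H 10) := hsub 10 (hout _ (by norm_num)) (hout _ (by norm_num))
  have S11 : Subsingleton (H 11) := hsub 11 (hout _ (by norm_num)) (hout _ (by norm_num))
  have S12 : Subsingleton (H 12) := hsub 12 (hout _ (by norm_num)) (hout _ (by norm_num))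
  have S13 : Subsingleton (H 13) := hsub 13 (hout _ (by norm_num)) (hout _ (by norm_num))
  have S14 : Subsingleton (H 14) := hsub 14 (hout _ (by norm_num)) (hout _ (by norm_num))
  have S15 : Subsingleton (H 15) := hsub 15 (hout _ (by norm_num)) (hout _ (by norm_num))
  have S16 : Subsingleton (H 16) := hsub 16 (hout _ (by norm_num)) (hout _ (by norm_num))
  have S5 : Subsingleton (H 5) := fz _ d5
  have S6 : Subsingleton (H 6) := fz _ d6
  have S7 : Subsingleton (H 7) := fz _ d7
  have S8 : Subsingleton (H 8) := fz _ d8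
  have S18 : Subsingleton (H 18) := fz _ d18
  have S19 : Subsingleton (H 19) := fz _ d19
  have S20 : Subsingleton (H 20) := fz _ d20
  have S21 : Subsingleton (H 21) := fz _ d21
  have S22 : Subsingleton (H 22) := fz _ d22
  have S23 : Subsingleton (H 23) := fz _ d23
  have S24 : Subsingleton (H 24) := fz _ d24
  have S25 : Subsingleton (H 25) := fz _ d25
  intro q
  rcases lt_or_ge q 0 with h | hl
  · exact ⟨fun hc => by omega, fun _ => hout q (Or.inl h)⟩
  rcases le_or_gt q 26 with hr | h
  · interval_cases q <;>
      refine ⟨fun hc => ?_, fun hc => ?_⟩ <;>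
      first
        | omega
        | assumption
  · exact ⟨fun hc => by omega, fun _ => hout q (Or.inr h)⟩
end
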